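/- Let S be a Cu-semigroup, let x, y be full elements of S, and let η ∈ (0,∞). Then: (1) if λ(x) ≤ η·λ(y) for every λ ∈ F(S), then (1/η)·rc(S, y) ≤ rc(S, x); (2) if x ≤ y, then rc(S, y) ≤ rc(S, x); (3) if λ(x) = η·λ(y) for every λ ∈ F(S), then (1/η)·rc(S, y) = rc(S, x). -/

import Mathlib

open scoped ENNReal

/-- `x' ≪ x`: for every increasing sequence whose supremum is `≥ x`,
some term of the sequence dominates `x'`. -/
def CuWayBelow {S : Type*} [Preorder S] (x' x : S) : Prop :=
  ∀ f : ℕ → S, Monotone f → ∀ s : S, IsLUB (Set.range f) s → x ≤ s → ∃ n, x' ≤ f n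

/-- A `Cu`-semigroup: a partially ordered abelian monoid whose least element is `0`,
satisfying the axioms (O1)–(O4). -/
class CuSemigroup (S : Type*) extends AddCommMonoid S, PartialOrder S, IsOrderedAddMonoid S where
  zero_le : ∀ x : S, 0 ≤ x
  O1 : ∀ f : ℕ → S, Monotone f → ∃ s : S, IsLUB (Set.range f) s
  O2 : ∀ x : S, ∃ f : ℕ → S, (∀ n, CuWayBelow (f n) (f (n + 1))) ∧ IsLUB (Set.range f) x
  O3 : ∀ {x' x y' y : S}, CuWayBelow x' x → CuWayBelow y' y → CuWayBelow (x' + y') (x + y)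
  O4 : ∀ f g : ℕ → S, Monotone f → Monotone g → ∀ a b : S,
      IsLUB (Set.range f) a → IsLUB (Set.range g) b →
      IsLUB (Set.range fun n => f n + g n) (a + b)

/-- A functional on a `Cu`-semigroup: a map `S → [0,∞]` which is additive, order
preserving, sends `0` to `0`, and preserves suprema of increasing sequences. -/
structure IsCuFunctional {S : Type*} [CuSemigroup S] (Λ : S → ℝ≥0∞) : Prop where
  map_zero : Λ 0 = 0
  map_add : ∀ x y : S, Λ (x + y) = Λ x + Λ y
  mono : Monotone Λ
  map_sup : ∀ f : ℕ → S, Monotone f → ∀ s : S, IsLUB (Set.range f) s → Λ s = ⨆ n, Λ (f n)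

/-- `x` is full if `∞ · x = sup_n (n • x)` is the largest element of `S`. -/
def IsFull {S : Type*} [CuSemigroup S] (x : S) : Prop :=
  ∀ s : S, IsLUB (Set.range fun n : ℕ => n • x) s → ∀ y : S, y ≤ s

/-- `F_w(S) ≠ ∅`: there exists a functional normalized at `w`. -/
def FNormNonempty {S : Type*} [CuSemigroup S] (w : S) : Prop :=
  ∃ Λ : S → ℝ≥0∞, IsCuFunctional Λ ∧ Λ w = 1

/-- The rank ratio `ρ(x, y)`: the infimum of all `r ∈ (0,∞)` with
`λ(x) ≤ r·λ(y)` for every functional `λ`; `∞` if there is no such `r`. -/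
noncomputable def rankRatio {S : Type*} [CuSemigroup S] (x y : S) : ℝ≥0∞ :=
  sInf {r : ℝ≥0∞ | 0 < r ∧ r ≠ ⊤ ∧ ∀ Λ : S → ℝ≥0∞, IsCuFunctional Λ → Λ x ≤ r * Λ y}

/-- `S` has `r`-comparison relative to `w`. -/
def HasRComparison {S : Type*} [CuSemigroup S] (r : ℝ≥0∞) (w : S) : Prop :=
  ∀ x y : S, (∀ Λ : S → ℝ≥0∞, IsCuFunctional Λ → Λ x + r * Λ w ≤ Λ y) → x ≤ y

/-- The radius of comparison of `S` relative to `w`: the infimum of all `r ∈ (0,∞)`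
for which `S` has `r`-comparison relative to `w`; `∞` if there is no such `r`. -/
noncomputable def rc {S : Type*} [CuSemigroup S] (w : S) : ℝ≥0∞ :=
  sInf {r : ℝ≥0∞ | 0 < r ∧ r ≠ ⊤ ∧ HasRComparison r w}

/-- Proposition (rcProperties, parts (1)-(3)): for full elements `x, y` and
`η ∈ (0,∞)`:
(1) if `λ(x) ≤ η·λ(y)` for every functional `λ`, then `(1/η)·rc(S,y) ≤ rc(S,x)`;
(2) if `x ≤ y` then `rc(S,y) ≤ rc(S,x)`;
(3) if `λ(x) = η·λ(y)` for every functional `λ`, then `(1/η)·rc(S,y) = rc(S,x)`. -/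

lemma rc_aux {S : Type*} [CuSemigroup S] (x y : S)
    (η : ℝ≥0∞) (hη0 : η ≠ 0) (hηtop : η ≠ ⊤)
    (h : ∀ Λ : S → ℝ≥0∞, IsCuFunctional Λ → Λ x ≤ η * Λ y) :
    η⁻¹ * rc y ≤ rc x := by
  apply le_sInf
  rintro r ⟨hr0, hrtop, hrcomp⟩
  have hmem : η * r ∈ {r : ℝ≥0∞ | 0 < r ∧ r ≠ ⊤ ∧ HasRComparison r y} := by
    refine ⟨?_, ?_, ?_⟩
    · exact ENNReal.mul_pos hη0 hr0.ne'
    · exact ENNReal.mul_ne_top hηtop hrtop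
    · intro a b hab
      apply hrcomp a b
      intro Λ hΛ
      calc Λ a + r * Λ x ≤ Λ a + r * (η * Λ y) := by
            gcongr
            exact h Λ hΛ
        _ = Λ a + η * r * Λ y := by ring
        _ ≤ Λ b := hab Λ hΛ
  have h1 : rc y ≤ η * r := sInf_le hmem
  calc η⁻¹ * rc y ≤ η⁻¹ * (η * r) := by gcongr
    _ = r := by rw [← mul_assoc, ENNReal.inv_mul_cancel hη0 hηtop, one_mul]

theorem stmt14 {S : Type*} [CuSemigroup S] (x y : S)
    (hx : IsFull x) (hy : IsFull y)
    (η : ℝ≥0∞) (hη0 : 0 < η) (hηtop : η ≠ ⊤) :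
    ((∀ Λ : S → ℝ≥0∞, IsCuFunctional Λ → Λ x ≤ η * Λ y) → η⁻¹ * rc y ≤ rc x) ∧
      (x ≤ y → rc y ≤ rc x) ∧
      ((∀ Λ : S → ℝ≥0∞, IsCuFunctional Λ → Λ x = η * Λ y) → η⁻¹ * rc y = rc x) := by
  refine ⟨fun h => rc_aux x y η hη0.ne' hηtop h, ?_, ?_⟩
  · intro hxy
    apply sInf_le_sInf
    rintro r ⟨hr0, hrtop, hrcomp⟩
    refine ⟨hr0, hrtop, ?_⟩
    intro a b hab
    apply hrcomp a b
    intro Λ hΛ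
    calc Λ a + r * Λ x ≤ Λ a + r * Λ y := by gcongr; exact hΛ.mono hxy
      _ ≤ Λ b := hab Λ hΛ
  · intro h
    have h1 : η⁻¹ * rc y ≤ rc x := rc_aux x y η hη0.ne' hηtop (fun Λ hΛ => (h Λ hΛ).le)
    have h2 : (η⁻¹)⁻¹ * rc x ≤ rc y := by
      apply rc_aux y x η⁻¹ (ENNReal.inv_ne_zero.mpr hηtop) (ENNReal.inv_ne_top.mpr hη0.ne')
      intro Λ hΛ
      rw [h Λ hΛ, ← mul_assoc, ENNReal.inv_mul_cancel hη0.ne' hηtop, one_mul]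
    rw [inv_inv] at h2
    refine le_antisymm h1 ?_
    calc rc x = η⁻¹ * (η * rc x) := by
          rw [← mul_assoc, ENNReal.inv_mul_cancel hη0.ne' hηtop, one_mul]
      _ ≤ η⁻¹ * rc y := by gcongr
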